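/- A quadratic function f(x) = xᵀAx on ℤⁿ with symmetric matrix A = (a_{ij}) is multimodular if and only if a_{ij} - a_{i,j+1} - a_{i+1,j} + a_{i+1,j+1} ≤ 0 for all 0 ≤ i < j ≤ n, where by convention a_{ij} = 0 whenever i = 0 or j = n+1. -/

import Mathlib

/-- The set of multimodular directions
`F = {-e₁, e₁-e₂, e₂-e₃, …, e_{n-1}-eₙ, eₙ}` (1-indexed unit vectors). -/
def mmDir (n : ℕ) : Set (Fin n → ℤ) :=
  {d | ∃ k ≤ n, d = fun j : Fin n =>
    (if (j : ℕ) + 1 = k then 1 else 0) - (if (j : ℕ) + 1 = k + 1 then 1 else 0)}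

/-- `f : ℤⁿ → ℝ ∪ {+∞}` is multimodular. -/
def Multimodular {n : ℕ} (f : (Fin n → ℤ) → WithTop ℝ) : Prop :=
  ∀ z : Fin n → ℤ, f z ≠ ⊤ →
    ∀ d ∈ mmDir n, ∀ d' ∈ mmDir n, d ≠ d' →
      f z + f (z + d + d') ≤ f (z + d) + f (z + d')

/-- Submodularity on `ℤᵐ`. -/
def Submodular {m : ℕ} (h : (Fin m → ℤ) → WithTop ℝ) : Prop :=
  ∀ x y : Fin m → ℤ, h (x ⊔ y) + h (x ⊓ y) ≤ h x + h y

/-- L♮-convexity via discrete midpoint convexity. -/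
def LnatConvex {n : ℕ} (g : (Fin n → ℤ) → WithTop ℝ) : Prop :=
  ∀ p q : Fin n → ℤ,
    g (fun j => Int.fdiv (p j + q j + 1) 2) + g (fun j => Int.fdiv (p j + q j) 2)
      ≤ g p + g q

namespace QMM

variable {n : ℕ}

noncomputable def Bform (A : Matrix (Fin n) (Fin n) ℝ) (u v : Fin n → ℤ) : ℝ :=
  ∑ i : Fin n, ∑ j : Fin n, (u i : ℝ) * A i j * (v j : ℝ)

def dvec (n k : ℕ) : Fin n → ℤ := fun j =>
  (if (j : ℕ) + 1 = k then 1 else 0) - (if (j : ℕ) + 1 = k + 1 then 1 else 0)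

noncomputable def aEnt (A : Matrix (Fin n) (Fin n) ℝ) (k l : ℕ) : ℝ :=
  if h : 1 ≤ k ∧ k ≤ n ∧ 1 ≤ l ∧ l ≤ n then
    A ⟨k - 1, by have := h.2.1; omega⟩ ⟨l - 1, by have := h.2.2.2; omega⟩ else 0

lemma B_add_left (A : Matrix (Fin n) (Fin n) ℝ) (u v w : Fin n → ℤ) :
    Bform A (u + v) w = Bform A u w + Bform A v w := by
  simp only [Bform, ← Finset.sum_add_distrib]
  refine Finset.sum_congr rfl fun i _ => Finset.sum_congr rfl fun j _ => ?_
  simp only [Pi.add_apply]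
  push_cast
  ring

lemma B_add_right (A : Matrix (Fin n) (Fin n) ℝ) (u v w : Fin n → ℤ) :
    Bform A u (v + w) = Bform A u v + Bform A u w := by
  simp only [Bform, ← Finset.sum_add_distrib]
  refine Finset.sum_congr rfl fun i _ => Finset.sum_congr rfl fun j _ => ?_
  simp only [Pi.add_apply]
  push_cast
  ring

lemma B_symm {A : Matrix (Fin n) (Fin n) ℝ} (hA : A.IsSymm) (u v : Fin n → ℤ) :
    Bform A u v = Bform A v u := by
  rw [Bform, Finset.sum_comm]
  refine Finset.sum_congr rfl fun j _ => Finset.sum_congr rfl fun i _ => ?_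
  rw [← hA.apply j i]
  ring

lemma B_zero (A : Matrix (Fin n) (Fin n) ℝ) : Bform A 0 0 = 0 := by
  simp [Bform]

lemma sum_ind (k : ℕ) (g : Fin n → ℝ) :
    (∑ i : Fin n, if (i : ℕ) + 1 = k then g i else 0) =
      if h : 1 ≤ k ∧ k ≤ n then g ⟨k - 1, by omega⟩ else 0 := by
  split_ifs with h
  · rw [Finset.sum_eq_single (⟨k - 1, by omega⟩ : Fin n)]
    · rw [if_pos (by simp; omega)]
    · intro b _ hb
      rw [if_neg]
      intro hbk
      apply hb
      ext
      simp
      omega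
    · simp
  · apply Finset.sum_eq_zero
    intro i _
    rw [if_neg]
    have := i.2
    omega

lemma T_eq (A : Matrix (Fin n) (Fin n) ℝ) (k l : ℕ) :
    (∑ i : Fin n, ∑ j : Fin n,
        if (i : ℕ) + 1 = k ∧ (j : ℕ) + 1 = l then A i j else 0) = aEnt A k l := by
  have h1 : ∀ i : Fin n,
      (∑ j : Fin n, if (i : ℕ) + 1 = k ∧ (j : ℕ) + 1 = l then A i j else 0)
        = if (i : ℕ) + 1 = k then
            (if h : 1 ≤ l ∧ l ≤ n then A i ⟨l - 1, by omega⟩ else 0) else 0 := by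
    intro i
    by_cases hik : (i : ℕ) + 1 = k
    · simp only [hik, true_and, if_pos]
      exact sum_ind l (fun j => A i j)
    · simp [hik]
  simp only [h1]
  rw [sum_ind k (fun i => if h : 1 ≤ l ∧ l ≤ n then A i ⟨l - 1, by omega⟩ else 0)]
  unfold aEnt
  split_ifs with h1' h2' h3' <;> first | rfl | omega | tauto

lemma B_dvec (A : Matrix (Fin n) (Fin n) ℝ) (k l : ℕ) :
    Bform A (dvec n k) (dvec n l) =
      aEnt A k l - aEnt A k (l + 1) - aEnt A (k + 1) l + aEnt A (k + 1) (l + 1) := by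
  rw [← T_eq A k l, ← T_eq A k (l + 1), ← T_eq A (k + 1) l, ← T_eq A (k + 1) (l + 1)]
  simp only [Bform, dvec, ← Finset.sum_sub_distrib, ← Finset.sum_add_distrib]
  refine Finset.sum_congr rfl fun i _ => Finset.sum_congr rfl fun j _ => ?_
  split_ifs <;> first | (push_cast; ring1) | (exfalso; omega)

lemma dvec_ne {k l : ℕ} (hkl : k < l) (hl : l ≤ n) : dvec n k ≠ dvec n l := by
  intro h
  have h2 := congrFun h ⟨l - 1, by omega⟩
  simp only [dvec] at h2
  split_ifs at h2 <;> simp_all <;> omega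

lemma mult_iff (A : Matrix (Fin n) (Fin n) ℝ) (hA : A.IsSymm) :
    Multimodular (fun x : Fin n → ℤ =>
        ((∑ i : Fin n, ∑ j : Fin n, (x i : ℝ) * A i j * (x j : ℝ) : ℝ) : WithTop ℝ)) ↔
      ∀ k l : ℕ, k ≤ n → l ≤ n → k ≠ l → Bform A (dvec n k) (dvec n l) ≤ 0 := by
  constructor
  · intro h k l hk hl hkl
    have hne : dvec n k ≠ dvec n l := by
      rcases Nat.lt_or_ge k l with hlt | hge
      · exact dvec_ne hlt hl
      · exact (dvec_ne (by omega) hk).symm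
    have key := h 0 WithTop.coe_ne_top (dvec n k) ⟨k, hk, rfl⟩ (dvec n l) ⟨l, hl, rfl⟩ hne
    simp only [zero_add] at key
    rw [← WithTop.coe_add, ← WithTop.coe_add, WithTop.coe_le_coe] at key
    have key' : Bform A 0 0 + Bform A (dvec n k + dvec n l) (dvec n k + dvec n l)
        ≤ Bform A (dvec n k) (dvec n k) + Bform A (dvec n l) (dvec n l) := key
    rw [B_zero, B_add_left, B_add_right, B_add_right] at key'
    have hs := B_symm hA (dvec n k) (dvec n l)
    linarith
  · intro h z _ d hd d' hd' hne
    obtain ⟨k, hk, rfl⟩ := hd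
    obtain ⟨l, hl, rfl⟩ := hd'
    rw [← WithTop.coe_add, ← WithTop.coe_add, WithTop.coe_le_coe]
    show Bform A z z + Bform A (z + dvec n k + dvec n l) (z + dvec n k + dvec n l)
        ≤ Bform A (z + dvec n k) (z + dvec n k) + Bform A (z + dvec n l) (z + dvec n l)
    have hkl : k ≠ l := by
      intro hEq
      exact hne (by rw [hEq])
    have hB := h k l hk hl hkl
    have hs := B_symm hA (dvec n k) (dvec n l)
    simp only [B_add_left, B_add_right] at *
    linarith

end QMM

theorem quadratic_multimodular_iff {n : ℕ} (A : Matrix (Fin n) (Fin n) ℝ)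
    (hA : A.IsSymm) :
    Multimodular (fun x : Fin n → ℤ =>
        ((∑ i : Fin n, ∑ j : Fin n, (x i : ℝ) * A i j * (x j : ℝ) : ℝ) : WithTop ℝ)) ↔
      (∀ i j : ℕ, i < j → j ≤ n →
        (let a : ℕ → ℕ → ℝ := fun k l =>
          if h : 1 ≤ k ∧ k ≤ n ∧ 1 ≤ l ∧ l ≤ n then
            A ⟨k - 1, by omega⟩ ⟨l - 1, by omega⟩ else 0
        a i j - a i (j + 1) - a (i + 1) j + a (i + 1) (j + 1) ≤ 0)) := by
  rw [QMM.mult_iff A hA]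
  constructor
  · intro h i j hij hjn
    show QMM.aEnt A i j - QMM.aEnt A i (j + 1) - QMM.aEnt A (i + 1) j
        + QMM.aEnt A (i + 1) (j + 1) ≤ 0
    rw [← QMM.B_dvec]
    exact h i j (by omega) hjn (by omega)
  · intro h k l hk hl hkl
    rw [QMM.B_dvec]
    rcases Nat.lt_or_ge k l with hlt | hge
    · exact h k l hlt hl
    · have h2 : QMM.aEnt A l k - QMM.aEnt A l (k + 1) - QMM.aEnt A (l + 1) k
          + QMM.aEnt A (l + 1) (k + 1) ≤ 0 := h l k (by omega) hk
      rw [← QMM.B_dvec, QMM.B_symm hA, QMM.B_dvec] at h2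
      exact h2
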